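/- For a non-symmetric numerical semigroup S(d1,d2,d3) with standard-form first minimal relation matrix, the genus (number of gaps) satisfies 2*G(d1,d2,d3) + d1 + d2 + d3 = 1 + a11*a22*a33 + a13*a32*a21 + a12*a23*a31. -/

import Mathlib

open Finset in
theorem stmt13 (d1 d2 d3 : ℕ)
    (a11 a12 a13 a21 a22 a23 a31 a32 a33 : ℕ)
    (hd1 : 1 < d1) (h12 : d1 < d2) (h23 : d2 < d3)
    (hgcd : Nat.gcd d1 (Nat.gcd d2 d3) = 1)
    (hmin1 : ¬ ∃ b c : ℕ, d1 = b * d2 + c * d3)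
    (hmin2 : ¬ ∃ a c : ℕ, d2 = a * d1 + c * d3)
    (hmin3 : ¬ ∃ a b : ℕ, d3 = a * d1 + b * d2)
    (hoff : 1 ≤ a12 ∧ 1 ≤ a13 ∧ 1 ≤ a21 ∧ 1 ≤ a23 ∧ 1 ≤ a31 ∧ 1 ≤ a32)
    (hdiag : 2 ≤ a11 ∧ 2 ≤ a22 ∧ 2 ≤ a33)
    (hr1 : a11 * d1 = a12 * d2 + a13 * d3)
    (hr2 : a22 * d2 = a21 * d1 + a23 * d3)
    (hr3 : a33 * d3 = a31 * d1 + a32 * d2)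
    (hc1 : a11 = a21 + a31) (hc2 : a22 = a12 + a32) (hc3 : a33 = a13 + a23)
    (hdet1 : a22 * a33 = d1 + a23 * a32)
    (hdet2 : a11 * a33 = d2 + a13 * a31)
    (hdet3 : a11 * a22 = d3 + a12 * a21) :
    2 * Nat.card {n : ℕ | ¬ ∃ a b c : ℕ, n = a * d1 + b * d2 + c * d3} + (d1 + d2 + d3)
      = 1 + a11 * a22 * a33 + a13 * a32 * a21 + a12 * a23 * a31 := by
  obtain ⟨o12, o13, o21, o23, o31, o32⟩ := hoff
  obtain ⟨o11, o22, o33⟩ := hdiag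
  haveI : NeZero d1 := ⟨by omega⟩
  have hd1pos : 0 < d1 := by omega
  -- integer versions of the relations
  have hz1 : (a11:ℤ) * d1 = a12 * d2 + a13 * d3 := by exact_mod_cast hr1
  have hz2 : (a22:ℤ) * d2 = a21 * d1 + a23 * d3 := by exact_mod_cast hr2
  have hz3 : (a33:ℤ) * d3 = a31 * d1 + a32 * d2 := by exact_mod_cast hr3
  set w : ℕ × ℕ → ℕ := fun p => p.1 * d2 + p.2 * d3 with hw
  set L : Finset (ℕ × ℕ) :=
      (Finset.range a22 ×ˢ Finset.range a13) ∪ (Finset.range a12 ×ˢ Finset.Ico a13 a33) with hLdef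
  -- the reduction lemma
  have red : ∀ n b c : ℕ, b * d2 + c * d3 ≤ n →
      ∃ x y z : ℕ, (y, z) ∈ L ∧ b * d2 + c * d3 = x * d1 + (y * d2 + z * d3) := by
    intro n
    induction n using Nat.strong_induction_on with
    | _ n ih =>
      intro b c hn
      by_cases hcase1 : a33 ≤ c
      · obtain ⟨c', rfl⟩ : ∃ c', c = c' + a33 := ⟨c - a33, by omega⟩
        have hkey : b * d2 + (c' + a33) * d3 = a31 * d1 + ((b + a32) * d2 + c' * d3) := by
          zify; linear_combination hz3
        have hpos : 0 < a31 * d1 := Nat.mul_pos (by omega) hd1pos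
        have hlt : (b + a32) * d2 + c' * d3 < n := by
          have := hn; omega
        obtain ⟨x, y, z, hyz, heq⟩ := ih _ hlt (b + a32) c' le_rfl
        refine ⟨x + a31, y, z, hyz, ?_⟩
        zify at heq ⊢; linear_combination heq + hz3
      · by_cases hcase2 : a12 ≤ b ∧ a13 ≤ c
        · obtain ⟨b', rfl⟩ : ∃ b', b = b' + a12 := ⟨b - a12, by omega⟩
          obtain ⟨c', rfl⟩ : ∃ c', c = c' + a13 := ⟨c - a13, by omega⟩
          have hkey : (b' + a12) * d2 + (c' + a13) * d3 = a11 * d1 + (b' * d2 + c' * d3) := by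
            zify; linear_combination -hz1
          have hpos : 0 < a11 * d1 := Nat.mul_pos (by omega) hd1pos
          have hlt : b' * d2 + c' * d3 < n := by omega
          obtain ⟨x, y, z, hyz, heq⟩ := ih _ hlt b' c' le_rfl
          refine ⟨x + a11, y, z, hyz, ?_⟩
          zify at heq ⊢; linear_combination heq - hz1
        · by_cases hcase3 : a22 ≤ b
          · have hc13 : c < a13 := by
              by_contra h; exact hcase2 ⟨le_trans (by omega) hcase3, by omega⟩
            obtain ⟨b', rfl⟩ : ∃ b', b = b' + a22 := ⟨b - a22, by omega⟩
            have hkey : (b' + a22) * d2 + c * d3 = a21 * d1 + (b' * d2 + (c + a23) * d3) := by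
              zify; linear_combination hz2
            have hpos : 0 < a21 * d1 := Nat.mul_pos (by omega) hd1pos
            have hlt : b' * d2 + (c + a23) * d3 < n := by omega
            obtain ⟨x, y, z, hyz, heq⟩ := ih _ hlt b' (c + a23) le_rfl
            refine ⟨x + a21, y, z, hyz, ?_⟩
            zify at heq ⊢; linear_combination heq + hz2
          · refine ⟨0, b, c, ?_, by ring⟩
            rw [hLdef]
            by_cases hc13 : c < a13
            · exact Finset.mem_union_left _ (by
                simp only [Finset.mem_product, Finset.mem_range]
                exact ⟨by omega, hc13⟩)
            · refine Finset.mem_union_right _ ?_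
              simp only [Finset.mem_product, Finset.mem_range, Finset.mem_Ico]
              refine ⟨by omega, by omega, by omega⟩
  -- L has cardinality d1
  have hdisjL : Disjoint (Finset.range a22 ×ˢ Finset.range a13)
      (Finset.range a12 ×ˢ Finset.Ico a13 a33) := by
    rw [Finset.disjoint_left]
    rintro ⟨y, z⟩ hp hq
    simp only [Finset.mem_product, Finset.mem_range, Finset.mem_Ico] at hp hq
    omega
  have hLcard : L.card = d1 := by
    rw [hLdef, Finset.card_union_of_disjoint hdisjL, Finset.card_product, Finset.card_product,
      Finset.card_range, Finset.card_range, Finset.card_range, Nat.card_Ico]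
    have h1 : a33 - a13 = a23 := by omega
    rw [h1]
    have : (a22 * a13 + a12 * a23 : ℤ) = d1 := by
      have e1 : (a22:ℤ) = a12 + a32 := by exact_mod_cast hc2
      have e3 : (a33:ℤ) = a13 + a23 := by exact_mod_cast hc3
      have ed : (a22:ℤ) * a33 = d1 + a23 * a32 := by exact_mod_cast hdet1
      linear_combination ed - (a22:ℤ) * e3 - (a23:ℤ) * e1
    exact_mod_cast this
  -- every residue is hit by a combination of d2 and d3
  have hbez : ∃ β γ : ℤ, (1 : ZMod d1) = β * (d2:ℕ) + γ * (d3:ℕ) := by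
    have e1 := Nat.gcd_eq_gcd_ab d1 (Nat.gcd d2 d3)
    have e2 := Nat.gcd_eq_gcd_ab d2 d3
    rw [hgcd] at e1
    refine ⟨Nat.gcdA d2 d3 * Nat.gcdB d1 (Nat.gcd d2 d3),
        Nat.gcdB d2 d3 * Nat.gcdB d1 (Nat.gcd d2 d3), ?_⟩
    have : (1:ℤ) = d1 * Nat.gcdA d1 (Nat.gcd d2 d3)
        + (Nat.gcdA d2 d3 * Nat.gcdB d1 (Nat.gcd d2 d3)) * d2
        + (Nat.gcdB d2 d3 * Nat.gcdB d1 (Nat.gcd d2 d3)) * d3 := by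
      push_cast at e1 e2 ⊢
      linear_combination e1 + (Nat.gcdB d1 (Nat.gcd d2 d3)) * e2
    calc (1 : ZMod d1) = ((1:ℤ) : ZMod d1) := by norm_num
      _ = _ := by
        rw [this]
        push_cast
        rw [ZMod.natCast_self]
        ring
  have hhit : ∀ t : ZMod d1, ∃ b c : ℕ, ((b * d2 + c * d3 : ℕ) : ZMod d1) = t := by
    obtain ⟨β, γ, hβγ⟩ := hbez
    intro t
    refine ⟨(t * (β : ZMod d1)).val, (t * (γ : ZMod d1)).val, ?_⟩
    push_cast
    rw [ZMod.natCast_rightInverse _, ZMod.natCast_rightInverse _]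
    calc t * (β:ZMod d1) * (d2:ℕ) + t * (γ:ZMod d1) * (d3:ℕ)
        = t * ((β:ZMod d1) * (d2:ℕ) + (γ:ZMod d1) * (d3:ℕ)) := by ring
      _ = t * 1 := by rw [← hβγ]
      _ = t := mul_one t
  have hLsurj : ∀ t : ZMod d1, ∃ p ∈ L, ((w p : ℕ) : ZMod d1) = t := by
    intro t
    obtain ⟨b, c, hbc⟩ := hhit t
    obtain ⟨x, y, z, hyz, heq⟩ := red (b * d2 + c * d3) b c le_rfl
    refine ⟨(y, z), hyz, ?_⟩
    have : ((b * d2 + c * d3 : ℕ) : ZMod d1) = ((y * d2 + z * d3 : ℕ) : ZMod d1) := by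
      rw [heq]
      push_cast
      rw [ZMod.natCast_self]
      ring
    rw [← hbc, this]
  -- injectivity of the residue map on L
  have hinj : Set.InjOn (fun p => ((w p : ℕ) : ZMod d1)) L := by
    apply Finset.injOn_of_card_image_eq
    have himg : L.image (fun p => ((w p : ℕ) : ZMod d1)) = Finset.univ := by
      apply Finset.eq_univ_iff_forall.mpr
      intro t
      obtain ⟨p, hp, hpt⟩ := hLsurj t
      exact Finset.mem_image.mpr ⟨p, hp, hpt⟩
    rw [himg, hLcard, Finset.card_univ, ZMod.card]
  have hmodinj : ∀ p ∈ L, ∀ q ∈ L, w p % d1 = w q % d1 → p = q := by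
    intro p hp q hq h
    apply hinj hp hq
    show ((w p : ℕ) : ZMod d1) = ((w q : ℕ) : ZMod d1)
    rw [← ZMod.natCast_mod (w p) d1, ← ZMod.natCast_mod (w q) d1, h]
  -- membership in the semigroup via canonical forms
  have hSiff : ∀ n : ℕ, (∃ a b c : ℕ, n = a * d1 + b * d2 + c * d3) ↔
      (∃ p ∈ L, ∃ x : ℕ, n = x * d1 + w p) := by
    intro n
    constructor
    · rintro ⟨a, b, c, rfl⟩
      obtain ⟨x, y, z, hyz, heq⟩ := red (b * d2 + c * d3) b c le_rfl
      refine ⟨(y, z), hyz, a + x, ?_⟩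
      show a * d1 + b * d2 + c * d3 = (a + x) * d1 + (y * d2 + z * d3)
      have h0 : a * d1 + b * d2 + c * d3 = a * d1 + (b * d2 + c * d3) := by ring
      rw [h0, heq]; ring
    · rintro ⟨p, hp, x, rfl⟩
      refine ⟨x, p.1, p.2, ?_⟩
      show x * d1 + (p.1 * d2 + p.2 * d3) = _
      ring
  -- arithmetic helpers
  have hdm : ∀ m : ℕ, m % d1 + (m / d1) * d1 = m := by
    intro m
    rw [Nat.mul_comm]
    exact Nat.mod_add_div m d1
  have hdivlt : ∀ m n : ℕ, m % d1 = n % d1 → m < n → m / d1 < n / d1 := by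
    intro m n h hlt
    have h1 := Nat.mod_add_div m d1
    have h2 := Nat.mod_add_div n d1
    by_contra hc
    push_neg at hc
    have h3 := Nat.mul_le_mul_left d1 hc
    linarith
  have hdivle : ∀ m n : ℕ, m % d1 = n % d1 → m ≤ n → ∃ x : ℕ, n = x * d1 + m := by
    intro m n h hle
    have h1 := Nat.mod_add_div m d1
    have h2 := Nat.mod_add_div n d1
    have hle2 : m / d1 ≤ n / d1 := by
      by_contra hc
      push_neg at hc
      have hc' : n / d1 + 1 ≤ m / d1 := hc
      have h3 := Nat.mul_le_mul_left d1 hc'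
      have hexp : d1 * (n / d1 + 1) = d1 * (n / d1) + d1 := by ring
      linarith
    obtain ⟨k, hk⟩ : ∃ k, n / d1 = m / d1 + k := ⟨n / d1 - m / d1, by omega⟩
    refine ⟨k, ?_⟩
    have h2' : n % d1 + d1 * (m / d1 + k) = n := by rw [← hk]; exact h2
    zify at h1 h2' h ⊢
    linear_combination h1 - h2' - h
  set Gf : Finset ℕ :=
      L.biUnion (fun p => (Finset.range (w p / d1)).image (fun k => w p % d1 + k * d1))
      with hGfdef
  have hset : {n : ℕ | ¬ ∃ a b c : ℕ, n = a * d1 + b * d2 + c * d3} = ↑Gf := by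
    ext n
    simp only [Set.mem_setOf_eq, Finset.mem_coe, hGfdef, Finset.mem_biUnion,
      Finset.mem_image, Finset.mem_range]
    constructor
    · intro hn
      obtain ⟨p, hp, hpt⟩ := hLsurj ((n : ℕ) : ZMod d1)
      have hmod : w p % d1 = n % d1 := by
        rwa [ZMod.natCast_eq_natCast_iff] at hpt
      have hlt : n < w p := by
        by_contra h
        push_neg at h
        obtain ⟨x, hx⟩ := hdivle (w p) n hmod h
        exact hn ((hSiff n).mpr ⟨p, hp, x, hx⟩)
      refine ⟨p, hp, n / d1, hdivlt n (w p) hmod.symm hlt, ?_⟩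
      rw [hmod]
      exact hdm n
    · rintro ⟨p, hp, k, hk, hkeq⟩ ⟨a, b, c, habc⟩
      obtain ⟨q, hq, x, hx⟩ := (hSiff n).mp ⟨a, b, c, habc⟩
      have hnq : n % d1 = w q % d1 := by
        rw [hx, Nat.add_comm, Nat.add_mul_mod_self_right]
      have hnp : n % d1 = w p % d1 := by
        rw [← hkeq, Nat.add_mul_mod_self_right, Nat.mod_mod_of_dvd _ dvd_rfl]
      have hqp : q = p := hmodinj q hq p hp (by rw [← hnq, hnp])
      have hnlt : n < w p := by
        have h1 := Nat.mod_add_div (w p) d1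
        have h2 : k + 1 ≤ w p / d1 := hk
        have h3 := Nat.mul_le_mul_left d1 h2
        have hexp : d1 * (k + 1) = d1 * k + d1 := by ring
        have hexp2 : k * d1 = d1 * k := by ring
        omega
      rw [hqp] at hx
      have : w p ≤ n := by rw [hx]; exact Nat.le_add_left _ _
      omega
  -- cardinality of the gap finset
  have hblockinj : ∀ p : ℕ × ℕ, Function.Injective (fun k => w p % d1 + k * d1) := by
    intro p k1 k2 h
    have h2 : k1 * d1 = k2 * d1 := Nat.add_left_cancel h
    exact Nat.eq_of_mul_eq_mul_right hd1pos h2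
  have hGfcard : Gf.card = ∑ p ∈ L, w p / d1 := by
    rw [hGfdef, Finset.card_biUnion]
    · apply Finset.sum_congr rfl
      intro p _
      rw [Finset.card_image_of_injective _ (hblockinj p), Finset.card_range]
    · intro p hp q hq hpq
      rw [Function.onFun, Finset.disjoint_left]
      intro n hn1 hn2
      simp only [Finset.mem_image, Finset.mem_range] at hn1 hn2
      obtain ⟨k1, _, he1⟩ := hn1
      obtain ⟨k2, _, he2⟩ := hn2
      apply hpq
      apply hmodinj p hp q hq
      have m1 : n % d1 = w p % d1 := by
        rw [← he1, Nat.add_mul_mod_self_right, Nat.mod_mod_of_dvd _ dvd_rfl]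
      have m2 : n % d1 = w q % d1 := by
        rw [← he2, Nat.add_mul_mod_self_right, Nat.mod_mod_of_dvd _ dvd_rfl]
      rw [← m1, m2]
  -- the sum of residues
  have hmodinjOn : Set.InjOn (fun p => w p % d1) L := fun p hp q hq h => hmodinj p hp q hq h
  have himgmod : L.image (fun p => w p % d1) = Finset.range d1 := by
    apply Finset.eq_of_subset_of_card_le
    · intro r hr
      simp only [Finset.mem_image] at hr
      obtain ⟨p, _, rfl⟩ := hr
      exact Finset.mem_range.mpr (Nat.mod_lt _ hd1pos)
    · rw [Finset.card_range, Finset.card_image_of_injOn hmodinjOn, hLcard]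
  have hmodsum : ∑ p ∈ L, w p % d1 = ∑ r ∈ Finset.range d1, r := by
    rw [← himgmod]
    exact (Finset.sum_image (g := fun p => w p % d1) (f := fun r => r)
      (fun p hp q hq h => hmodinjOn hp hq h)).symm
  have hcount : d1 * Gf.card + ∑ r ∈ Finset.range d1, r = ∑ p ∈ L, w p := by
    rw [hGfcard, Finset.mul_sum, ← hmodsum, ← Finset.sum_add_distrib]
    apply Finset.sum_congr rfl
    intro p _
    exact Nat.div_add_mod (w p) d1
  -- computing the sum over L
  have hfst : ∀ (s t : Finset ℕ), ∑ p ∈ s ×ˢ t, p.1 = t.card * ∑ i ∈ s, i := by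
    intro s t
    rw [Finset.sum_product, Finset.mul_sum]
    apply Finset.sum_congr rfl
    intro x _
    rw [Finset.sum_const, smul_eq_mul]
  have hsnd : ∀ (s t : Finset ℕ), ∑ p ∈ s ×ˢ t, p.2 = s.card * ∑ i ∈ t, i := by
    intro s t
    rw [Finset.sum_product]
    show ∑ _x ∈ s, (∑ i ∈ t, i) = _
    rw [Finset.sum_const, smul_eq_mul]
  have hsumprod : ∀ (s t : Finset ℕ), ∑ p ∈ s ×ˢ t, (p.1 * d2 + p.2 * d3)
      = (t.card * ∑ i ∈ s, i) * d2 + (s.card * ∑ i ∈ t, i) * d3 := by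
    intro s t
    rw [Finset.sum_add_distrib, ← Finset.sum_mul, ← Finset.sum_mul, hfst, hsnd]
  have hsum_split : ∑ p ∈ L, w p =
      (a13 * ∑ i ∈ Finset.range a22, i) * d2 + (a22 * ∑ i ∈ Finset.range a13, i) * d3
      + ((a23 * ∑ i ∈ Finset.range a12, i) * d2 + (a12 * ∑ i ∈ Finset.Ico a13 a33, i) * d3) := by
    have hwp : ∀ p : ℕ × ℕ, w p = p.1 * d2 + p.2 * d3 := fun p => rfl
    rw [hLdef, Finset.sum_union hdisjL]
    simp only [hwp]
    rw [hsumprod, hsumprod, Finset.card_range, Finset.card_range, Finset.card_range, Nat.card_Ico]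
    have h13 : a33 - a13 = a23 := by omega
    rw [h13]
  have hIco : (∑ i ∈ Finset.range a13, i) + (∑ i ∈ Finset.Ico a13 a33, i)
      = ∑ i ∈ Finset.range a33, i := by
    rw [Finset.range_eq_Ico, Finset.range_eq_Ico]
    exact Finset.sum_Ico_consecutive _ (Nat.zero_le a13) (by omega : a13 ≤ a33)
  have g22 := Finset.sum_range_id_mul_two a22
  have g13 := Finset.sum_range_id_mul_two a13
  have g12 := Finset.sum_range_id_mul_two a12
  have g33 := Finset.sum_range_id_mul_two a33
  have gR := Finset.sum_range_id_mul_two d1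
  -- final assembly
  rw [hset, Nat.card_coe_set_eq, Set.ncard_coe_finset]
  apply Nat.eq_of_mul_eq_mul_left hd1pos
  rw [hsum_split] at hcount
  zify [show 1 ≤ a22 from by omega] at g22
  zify [show 1 ≤ a13 from by omega] at g13
  zify [show 1 ≤ a12 from by omega] at g12
  zify [show 1 ≤ a33 from by omega] at g33
  zify [show 1 ≤ d1 from by omega] at gR
  zify at hcount hIco ⊢
  have e11 : (a11:ℤ) = a21 + a31 := by exact_mod_cast hc1
  have e22 : (a22:ℤ) = a12 + a32 := by exact_mod_cast hc2
  have e33 : (a33:ℤ) = a13 + a23 := by exact_mod_cast hc3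
  have zdet1 : (a22:ℤ) * a33 = d1 + a23 * a32 := by exact_mod_cast hdet1
  have zdet2 : (a11:ℤ) * a33 = d2 + a13 * a31 := by exact_mod_cast hdet2
  have zdet3 : (a11:ℤ) * a22 = d3 + a12 * a21 := by exact_mod_cast hdet3
  have ed1 : (d1:ℤ) = (a12 + a32) * (a13 + a23) - a23 * a32 := by
    linear_combination -zdet1 + (a33:ℤ) * e22 + ((a12:ℤ) + a32) * e33
  have ed2 : (d2:ℤ) = (a21 + a31) * (a13 + a23) - a13 * a31 := by
    linear_combination -zdet2 + (a33:ℤ) * e11 + ((a21:ℤ) + a31) * e33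
  have ed3 : (d3:ℤ) = (a21 + a31) * (a12 + a32) - a12 * a21 := by
    linear_combination -zdet3 + (a22:ℤ) * e11 + ((a21:ℤ) + a31) * e22
  rw [ed1] at gR
  rw [e22] at g22
  rw [e33] at g33
  rw [e22, ed1, ed2, ed3] at hcount
  rw [e11, e22, e33, ed1, ed2, ed3]
  linear_combination (2:ℤ) * hcount - gR
    + (a13:ℤ) * (((a21:ℤ) + a31) * ((a13:ℤ) + a23) - (a13:ℤ) * a31) * g22
    + (a23:ℤ) * (((a21:ℤ) + a31) * ((a13:ℤ) + a23) - (a13:ℤ) * a31) * g12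
    + (((a12:ℤ) + a32) - a12) * (((a21:ℤ) + a31) * ((a12:ℤ) + a32) - (a12:ℤ) * a21) * g13
    + 2 * (a12:ℤ) * (((a21:ℤ) + a31) * ((a12:ℤ) + a32) - (a12:ℤ) * a21) * hIco
    + (a12:ℤ) * (((a21:ℤ) + a31) * ((a12:ℤ) + a32) - (a12:ℤ) * a21) * g33
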